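/- For every integer n ≥ 2, 0 < MP(n) − g(n) < x̂_{δ+σ}·(κ − δ − σ)/n. In particular, lim_{n→∞} [MP(n) − g(n)] = 0. -/

import Mathlib

open Filter Finset

/-- The benefit function `f` with its first and second derivatives, together with
the maximizer map `α ↦ x̂_α` (the unique `x ≥ 0` with `f'(x̂_α) = α` for `α ∈ (0, f'(0)]`). -/
structure BenefitFun where
  f : ℝ → ℝ
  f' : ℝ → ℝ
  f'' : ℝ → ℝ
  xhat : ℝ → ℝ
  f_zero : f 0 = 0
  f_nonneg : ∀ x : ℝ, 0 ≤ x → 0 ≤ f x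
  hasDeriv : ∀ x ∈ Set.Ici (0:ℝ), HasDerivWithinAt f (f' x) (Set.Ici 0) x
  hasDeriv' : ∀ x ∈ Set.Ici (0:ℝ), HasDerivWithinAt f' (f'' x) (Set.Ici 0) x
  cont_f'' : ContinuousOn f'' (Set.Ici 0)
  f'_pos : ∀ x : ℝ, 0 < x → 0 < f' x
  f''_neg : ∀ x : ℝ, 0 < x → f'' x < 0
  f'_tendsto : Filter.Tendsto f' Filter.atTop (nhds 0)
  xhat_nonneg : ∀ α : ℝ, 0 < α → α ≤ f' 0 → 0 ≤ xhat α
  xhat_spec : ∀ α : ℝ, 0 < α → α ≤ f' 0 → f' (xhat α) = α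
  xhat_unique : ∀ α : ℝ, 0 < α → α ≤ f' 0 → ∀ x : ℝ, 0 ≤ x → f' x = α → x = xhat α
  xhat_max : ∀ α : ℝ, 0 < α → α ≤ f' 0 → ∀ x : ℝ, 0 ≤ x → f x - α * x ≤ f (xhat α) - α * xhat α

/-- `f*(α) = f(x̂_α) − α·x̂_α = sup_{x ≥ 0} (f(x) − α x)`. -/
noncomputable def BenefitFun.fstar (B : BenefitFun) (α : ℝ) : ℝ :=
  B.f (B.xhat α) - α * B.xhat α

/-- `β̃(n) = (1/n)·κ + ((n−1)/n)·(δ+σ)`. -/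
noncomputable def btilde (κ δ σ : ℝ) (n : ℕ) : ℝ :=
  (1 / (n:ℝ)) * κ + (((n:ℝ) - 1) / (n:ℝ)) * (δ + σ)

/-- `G(n) = n·f*(β̃(n))` (with `G(0) = 0`). -/
noncomputable def Gfun (B : BenefitFun) (κ δ σ : ℝ) (n : ℕ) : ℝ :=
  (n:ℝ) * B.fstar (btilde κ δ σ n)

/-- Marginal product: `MP(n) = G(n) − G(n−1)`, so `MP(1) = G(1)`. -/
noncomputable def MP (B : BenefitFun) (κ δ σ : ℝ) (n : ℕ) : ℝ :=
  Gfun B κ δ σ n - Gfun B κ δ σ (n - 1)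

theorem stmt4 (B : BenefitFun)
    (κ δ σ : ℝ) (hκ : 0 < κ) (hδ : 0 < δ) (hσ : 0 < σ)
    (hcost : δ + σ < κ) (hκf : κ < B.f' 0) :
    (∀ n : ℕ, 2 ≤ n →
      0 < MP B κ δ σ n - B.fstar (btilde κ δ σ n)
      ∧ MP B κ δ σ n - B.fstar (btilde κ δ σ n) < B.xhat (δ + σ) * (κ - δ - σ) / (n:ℝ))
    ∧ Filter.Tendsto (fun n : ℕ => MP B κ δ σ n - B.fstar (btilde κ δ σ n))
        Filter.atTop (nhds 0) := by
  -- f' is strictly antitone on [0,∞)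
  have hanti : StrictAntiOn B.f' (Set.Ici 0) := by
    apply strictAntiOn_of_deriv_neg (convex_Ici 0)
    · exact fun x hx => (B.hasDeriv' x hx).continuousWithinAt
    · intro x hx
      rw [interior_Ici] at hx
      have h := (B.hasDeriv' x (Set.mem_Ici.2 (le_of_lt (Set.mem_Ioi.1 hx)))).hasDerivAt (Ici_mem_nhds hx)
      rw [h.deriv]
      exact B.f''_neg x hx
  have hxpos : ∀ α : ℝ, 0 < α → α < B.f' 0 → 0 < B.xhat α := by
    intro α h0 h1
    rcases lt_or_eq_of_le (B.xhat_nonneg α h0 h1.le) with h | h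
    · exact h
    · exfalso
      have hs := B.xhat_spec α h0 h1.le
      rw [← h] at hs; linarith
  have hxlt : ∀ α α' : ℝ, 0 < α → α < α' → α' ≤ B.f' 0 → B.xhat α' < B.xhat α := by
    intro α α' h0 h h1
    have ha := B.xhat_spec α h0 (h.le.trans h1)
    have ha' := B.xhat_spec α' (h0.trans h) h1
    by_contra hc
    push_neg at hc
    rcases lt_or_eq_of_le hc with hlt | heq
    · have := hanti (B.xhat_nonneg α h0 (h.le.trans h1)) (B.xhat_nonneg α' (h0.trans h) h1) hlt
      rw [ha, ha'] at this; linarith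
    · rw [heq, ha'] at ha; linarith
  -- fstar difference bounds
  have hfb : ∀ α α' : ℝ, 0 < α → α ≤ α' → α' ≤ B.f' 0 →
      (α' - α) * B.xhat α' ≤ B.fstar α - B.fstar α' ∧
      B.fstar α - B.fstar α' ≤ (α' - α) * B.xhat α := by
    intro α α' h0 h h1
    have h0' := h0.trans_le h
    have hx' := B.xhat_nonneg α' h0' h1
    have hx := B.xhat_nonneg α h0 (h.trans h1)
    have hmax := B.xhat_max α h0 (h.trans h1) (B.xhat α') hx'
    have hmax' := B.xhat_max α' h0' h1 (B.xhat α) hx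
    unfold BenefitFun.fstar
    constructor <;> nlinarith
  have hds : 0 < δ + σ := by linarith
  -- main bound for n ≥ 2
  have main : ∀ n : ℕ, 2 ≤ n →
      0 < MP B κ δ σ n - B.fstar (btilde κ δ σ n)
      ∧ MP B κ δ σ n - B.fstar (btilde κ δ σ n) < B.xhat (δ + σ) * (κ - δ - σ) / (n:ℝ) := by
    intro n hn
    have hn2 : (2:ℝ) ≤ (n:ℝ) := by exact_mod_cast hn
    have hnpos : (0:ℝ) < (n:ℝ) := by linarith
    have hn1pos : (0:ℝ) < (n:ℝ) - 1 := by linarith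
    have hcast : ((n - 1 : ℕ) : ℝ) = (n:ℝ) - 1 := by
      have : (1:ℕ) ≤ n := by omega
      push_cast [Nat.cast_sub this]; ring
    set a := btilde κ δ σ n with ha_def
    set a' := btilde κ δ σ (n - 1) with ha'_def
    have ha_val : a = (δ + σ) + (κ - δ - σ) / (n:ℝ) := by
      rw [ha_def]; unfold btilde; field_simp; ring
    have ha'_val : a' = (δ + σ) + (κ - δ - σ) / ((n:ℝ) - 1) := by
      rw [ha'_def]; unfold btilde; rw [hcast]; field_simp; ring
    have hgap : 0 < κ - δ - σ := by linarith
    have haa' : a < a' := by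
      rw [ha_val, ha'_val]
      have : (κ - δ - σ) / (n:ℝ) < (κ - δ - σ) / ((n:ℝ) - 1) :=
        div_lt_div_of_pos_left hgap hn1pos (by linarith)
      linarith
    have ha_gt : δ + σ < a := by
      rw [ha_val]
      have : 0 < (κ - δ - σ) / (n:ℝ) := div_pos hgap hnpos
      linarith
    have ha'_le : a' ≤ κ := by
      rw [ha'_val]
      have h1 : (κ - δ - σ) / ((n:ℝ) - 1) ≤ (κ - δ - σ) / 1 :=
        div_le_div_of_nonneg_left hgap.le one_pos (by linarith)
      rw [div_one] at h1
      linarith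
    have ha'_lt : a' < B.f' 0 := lt_of_le_of_lt ha'_le hκf
    have ha_pos : 0 < a := lt_trans hds ha_gt
    have hkey : ((n:ℝ) - 1) * (a' - a) = (κ - δ - σ) / (n:ℝ) := by
      rw [ha_val, ha'_val]; field_simp; ring
    -- MP − g = (n−1)(fstar a − fstar a')
    have hMP : MP B κ δ σ n - B.fstar a = ((n:ℝ) - 1) * (B.fstar a - B.fstar a') := by
      unfold MP Gfun
      rw [hcast, ← ha_def, ← ha'_def]; ring
    obtain ⟨hlow, hup⟩ := hfb a a' ha_pos haa'.le ha'_lt.le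
    have hxa' : 0 < B.xhat a' := hxpos a' (lt_trans ha_pos haa') ha'_lt
    have hxa_lt : B.xhat a < B.xhat (δ + σ) :=
      hxlt (δ + σ) a hds ha_gt (le_trans (le_trans haa'.le ha'_le) hκf.le)
    constructor
    · rw [hMP]
      have h1 : ((n:ℝ) - 1) * ((a' - a) * B.xhat a') ≤ ((n:ℝ) - 1) * (B.fstar a - B.fstar a') :=
        mul_le_mul_of_nonneg_left hlow hn1pos.le
      have h2 : 0 < ((n:ℝ) - 1) * ((a' - a) * B.xhat a') := by
        apply mul_pos hn1pos (mul_pos (by linarith) hxa')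
      linarith
    · rw [hMP]
      have h1 : ((n:ℝ) - 1) * (B.fstar a - B.fstar a') ≤ ((n:ℝ) - 1) * ((a' - a) * B.xhat a) :=
        mul_le_mul_of_nonneg_left hup hn1pos.le
      have h2 : ((n:ℝ) - 1) * ((a' - a) * B.xhat a) < ((n:ℝ) - 1) * ((a' - a) * B.xhat (δ + σ)) := by
        apply mul_lt_mul_of_pos_left _ hn1pos
        exact mul_lt_mul_of_pos_left hxa_lt (by linarith)
      have h3 : ((n:ℝ) - 1) * ((a' - a) * B.xhat (δ + σ)) = B.xhat (δ + σ) * (κ - δ - σ) / (n:ℝ) := by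
        have : ((n:ℝ) - 1) * ((a' - a) * B.xhat (δ + σ)) = (((n:ℝ) - 1) * (a' - a)) * B.xhat (δ + σ) := by ring
        rw [this, hkey]; ring
      linarith
  refine ⟨main, ?_⟩
  apply squeeze_zero'
  · filter_upwards [eventually_atTop.2 ⟨2, fun n hn => hn⟩] with n hn
    exact (main n hn).1.le
  · filter_upwards [eventually_atTop.2 ⟨2, fun n hn => hn⟩] with n hn
    exact (main n hn).2.le
  · exact tendsto_const_div_atTop_nhds_zero_nat (B.xhat (δ + σ) * (κ - δ - σ))
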